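/- Let H be a complex Hilbert space, let A be a bounded self-adjoint operator on H with ⟨x, A x⟩ ≥ ℓ‖x‖² for all x ∈ H for some ℓ > 0, let m ≥ 1 and let s > m/2 be real. Let η : ℝ^m → ℂ be a continuous compactly supported function with ∫_{ℝ^m} η = 1, and let 𝓕η denote its Fourier transform. Then for all J, K ∈ H, the limit as ε → 0⁺ of ∫_{ℝ^m} |𝓕η(ε q)|² · (2π)^{-m} · ⟨J, cfc(fun x : ℝ => (x + ‖q‖²)^{-s}) A K⟩ dq exists and equals (4π)^{-m/2} · (Γ(s − m/2)/Γ(s)) · ⟨J, cfc(fun x => x^{m/2 − s}) A K⟩. -/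

import Mathlib

open MeasureTheory Real Filter Set
open scoped InnerProductSpace FourierTransform Topology

lemma aux_integrable {m : ℕ} {s x : ℝ} (hx : 0 < x) (hs : (m : ℝ) / 2 < s) :
    Integrable (fun q : EuclideanSpace ℝ (Fin m) => (x + ‖q‖ ^ 2) ^ (-s)) := by
  have hs0 : 0 < s := lt_of_le_of_lt (by positivity) hs
  have h2s : (Module.finrank ℝ (EuclideanSpace ℝ (Fin m)) : ℝ) < 2 * s := by
    rw [finrank_euclideanSpace_fin]; linarith
  have base := (integrable_rpow_neg_one_add_norm_sq (E := EuclideanSpace ℝ (Fin m))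
    (μ := volume) h2s).const_mul ((min x 1) ^ (-s))
  refine base.mono' ?_ (Eventually.of_forall fun q => ?_)
  · apply Continuous.aestronglyMeasurable
    apply Continuous.rpow_const (by continuity)
    intro q; left; positivity
  · have h1 : (0:ℝ) < min x 1 := lt_min hx one_pos
    have h2 : min x 1 * (1 + ‖q‖ ^ 2) ≤ x + ‖q‖ ^ 2 := by
      have := min_le_left x 1
      have := min_le_right x 1
      have h3 : (0:ℝ) ≤ ‖q‖ ^ 2 := by positivity
      nlinarith
    have h4 : (x + ‖q‖ ^ 2) ^ (-s) ≤ (min x 1 * (1 + ‖q‖ ^ 2)) ^ (-s) :=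
      Real.rpow_le_rpow_of_nonpos (by positivity) h2 (by linarith)
    rw [Real.norm_eq_abs, abs_of_nonneg (by positivity)]
    calc (x + ‖q‖ ^ 2) ^ (-s) ≤ (min x 1 * (1 + ‖q‖ ^ 2)) ^ (-s) := h4
      _ = (min x 1) ^ (-s) * (1 + ‖q‖ ^ 2) ^ (-(2*s)/2) := by
          rw [Real.mul_rpow h1.le (by positivity)]
          congr 1; ring_nf

lemma aux_integral {m : ℕ} {s x : ℝ} (hx : 0 < x) (hs : (m : ℝ) / 2 < s) :
    ∫ q : EuclideanSpace ℝ (Fin m), (x + ‖q‖ ^ 2) ^ (-s)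
      = π ^ ((m : ℝ) / 2) * (Real.Gamma (s - m / 2) / Real.Gamma s) * x ^ ((m : ℝ) / 2 - s) := by
  have hs0 : 0 < s := lt_of_le_of_lt (by positivity) hs
  have hsm : 0 < s - (m : ℝ) / 2 := by linarith
  have hΓ : 0 < Real.Gamma s := Real.Gamma_pos_of_pos hs0
  set E := EuclideanSpace ℝ (Fin m)
  set f : E → ℝ → ℝ := fun q t => t ^ (s - 1) * Real.exp (-((x + ‖q‖ ^ 2) * t)) with hf
  have hrpos : ∀ q : E, 0 < x + ‖q‖ ^ 2 := fun q => by positivity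
  have hsec : ∀ q : E, IntegrableOn (f q) (Ioi 0) := by
    intro q
    have := integrableOn_rpow_mul_exp_neg_mul_rpow (s := s - 1) (p := 1) (b := x + ‖q‖ ^ 2)
      (by linarith) one_pos (hrpos q)
    refine this.congr_fun (fun t ht => ?_) measurableSet_Ioi
    simp only [Real.rpow_one, hf]; ring_nf
  have hkey : ∀ q : E, ∫ t in Ioi 0, f q t = (x + ‖q‖ ^ 2) ^ (-s) * Real.Gamma s := by
    intro q
    rw [hf, Real.integral_rpow_mul_exp_neg_mul_Ioi hs0 (hrpos q),
      one_div, Real.inv_rpow (hrpos q).le, ← Real.rpow_neg (hrpos q).le]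
  have hmeas : AEStronglyMeasurable (Function.uncurry f)
      (volume.prod (volume.restrict (Ioi 0))) := by
    apply Measurable.aestronglyMeasurable
    apply Measurable.mul
    · fun_prop
    · fun_prop
  have hprod : Integrable (Function.uncurry f) (volume.prod (volume.restrict (Ioi 0))) := by
    rw [integrable_prod_iff hmeas]
    constructor
    · exact Eventually.of_forall fun q => hsec q
    · refine (((aux_integrable hx hs).mul_const (Real.Gamma s)).congr ?_)
      refine Eventually.of_forall fun q => ?_
      simp only []
      rw [← hkey q]
      refine (setIntegral_congr_fun measurableSet_Ioi fun t ht => ?_).symm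
      have ht0 : (0:ℝ) < t := ht
      have h0 : 0 ≤ Function.uncurry f (q, t) := by
        simp only [Function.uncurry, hf]; positivity
      rw [Real.norm_eq_abs, abs_of_nonneg h0]
      rfl
  -- swap
  have hswap : ∫ q : E, ∫ t in Ioi 0, f q t = ∫ t in Ioi 0, ∫ q : E, f q t :=
    integral_integral_swap hprod
  -- evaluate inner q-integral for fixed t > 0
  have hfr : (Module.finrank ℝ E : ℝ) = (m : ℝ) := by
    rw [finrank_euclideanSpace_fin]
  have hinner : ∀ t ∈ Ioi (0:ℝ), ∫ q : E, f q t
      = π ^ ((m:ℝ)/2) * (t ^ ((s - (m:ℝ)/2) - 1) * Real.exp (-(x * t))) := by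
    intro t ht
    have ht0 : (0:ℝ) < t := ht
    have h1 : ∀ q : E, f q t = (t ^ (s-1) * Real.exp (-(x*t))) * Real.exp (-t * ‖q‖^2) := by
      intro q
      rw [hf]
      simp only [mul_assoc, ← Real.exp_add]
      ring_nf
    calc ∫ q : E, f q t = ∫ q : E, (t ^ (s-1) * Real.exp (-(x*t))) * Real.exp (-t * ‖q‖^2) := by
          exact integral_congr_ae (Eventually.of_forall h1)
      _ = (t ^ (s-1) * Real.exp (-(x*t))) * ∫ q : E, Real.exp (-t * ‖q‖^2) := integral_const_mul _ _
      _ = (t ^ (s-1) * Real.exp (-(x*t))) * (π / t) ^ ((m:ℝ)/2) := by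
          rw [GaussianFourier.integral_rexp_neg_mul_sq_norm ht0, hfr]
      _ = π ^ ((m:ℝ)/2) * (t ^ ((s - (m:ℝ)/2) - 1) * Real.exp (-(x * t))) := by
          rw [Real.div_rpow pi_pos.le ht0.le, div_eq_mul_inv, ← Real.rpow_neg ht0.le,
            show (s - (m:ℝ)/2) - 1 = (s-1) + (-((m:ℝ)/2)) by ring,
            Real.rpow_add ht0]
          ring
  -- put together
  have houter : ∫ t in Ioi 0, ∫ q : E, f q t
      = π ^ ((m:ℝ)/2) * ((1/x) ^ (s - (m:ℝ)/2) * Real.Gamma (s - (m:ℝ)/2)) := by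
    rw [setIntegral_congr_fun measurableSet_Ioi hinner, integral_const_mul,
      Real.integral_rpow_mul_exp_neg_mul_Ioi hsm hx]
  have hleft : ∫ q : E, ∫ t in Ioi 0, f q t
      = (∫ q : E, (x + ‖q‖ ^ 2) ^ (-s)) * Real.Gamma s := by
    rw [integral_congr_ae (Eventually.of_forall hkey), integral_mul_const]
  have := hleft.symm.trans (hswap.trans houter)
  have hxpow : (1/x) ^ (s - (m:ℝ)/2) = x ^ ((m:ℝ)/2 - s) := by
    rw [one_div, Real.inv_rpow hx.le, ← Real.rpow_neg hx.le]
    ring_nf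
  rw [hxpow] at this
  field_simp at this ⊢
  linarith [this]

lemma aux_spectrum {H : Type*} [NormedAddCommGroup H] [InnerProductSpace ℂ H] [CompleteSpace H]
    (A : H →L[ℂ] H) (hA : IsSelfAdjoint A) (ℓ : ℝ) (hℓ : 0 < ℓ)
    (hbound : ∀ x : H, ℓ * ‖x‖ ^ 2 ≤ (⟪x, A x⟫_ℂ).re) :
    spectrum ℝ A ⊆ Set.Ici ℓ := by
  have hpos : (A - (algebraMap ℝ (H →L[ℂ] H)) ℓ).IsPositive := by
    constructor
    · exact ContinuousLinearMap.isSelfAdjoint_iff_isSymmetric.mp (hA.sub (IsSelfAdjoint.algebraMap _ (IsSelfAdjoint.all ℓ)))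
    · intro x
      have h1 : ((algebraMap ℝ (H →L[ℂ] H)) ℓ) x = (ℓ : ℂ) • x := by
        rw [Algebra.algebraMap_eq_smul_one]
        simp only [ContinuousLinearMap.smul_apply, ContinuousLinearMap.one_apply]
        rw [← algebraMap_smul ℂ ℓ x, Complex.coe_algebraMap]
      rw [ContinuousLinearMap.reApplyInnerSelf, ContinuousLinearMap.sub_apply, inner_sub_left,
        h1, inner_smul_left, map_sub]
      have h3 : RCLike.re ⟪A x, x⟫_ℂ = (⟪x, A x⟫_ℂ).re := inner_re_symm _ _
      have h4 : RCLike.re ((starRingEnd ℂ) (ℓ:ℂ) * ⟪x, x⟫_ℂ) = ℓ * ‖x‖^2 := by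
        rw [Complex.conj_ofReal]
        change (((ℓ:ℂ)) * ⟪x, x⟫_ℂ).re = _
        rw [Complex.re_ofReal_mul]
        congr 1
        exact inner_self_eq_norm_sq (𝕜 := ℂ) x
      rw [h3, h4]
      linarith [hbound x]
  have h0 : ∀ μ ∈ spectrum ℝ (A - (algebraMap ℝ (H →L[ℂ] H)) ℓ), 0 ≤ μ :=
    SpectrumRestricts.nnreal_iff.mp hpos.spectrumRestricts
  intro μ hμ
  have hmem : μ - ℓ ∈ spectrum ℝ (A - (algebraMap ℝ (H →L[ℂ] H)) ℓ) := by
    rw [spectrum.mem_iff] at hμ ⊢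
    convert hμ using 2
    rw [map_sub]
    abel
  have := h0 _ hmem
  rw [Set.mem_Ici]
  linarith

section
variable {H : Type*} [NormedAddCommGroup H] [InnerProductSpace ℂ H] [CompleteSpace H]
  (A : H →L[ℂ] H) (hA : IsSelfAdjoint A) {ℓ : ℝ} (hℓ : 0 < ℓ)
  (hσ : spectrum ℝ A ⊆ Set.Ici ℓ) {m : ℕ} {s : ℝ} (hs : (m : ℝ) / 2 < s)

include hℓ hσ hA hs in
set_option maxHeartbeats 1000000 in
lemma aux_exchange (J K : H) :
    ∫ q : EuclideanSpace ℝ (Fin m), ⟪J, cfc (fun x : ℝ => (x + ‖q‖ ^ 2) ^ (-s)) A K⟫_ℂ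
      = ((π ^ ((m : ℝ) / 2) * (Real.Gamma (s - m / 2) / Real.Gamma s) : ℝ) : ℂ) *
          ⟪J, cfc (fun x : ℝ => x ^ ((m : ℝ) / 2 - s)) A K⟫_ℂ := by
  have hs0 : 0 < s := lt_of_le_of_lt (by positivity) hs
  set E := EuclideanSpace ℝ (Fin m)
  set σA := spectrum ℝ A with hσA
  have hpos : ∀ x : σA, (0:ℝ) < (x : ℝ) := fun x => lt_of_lt_of_le hℓ (hσ x.2)
  -- the two-variable continuous map
  have hGcont : Continuous fun p : E × σA => (((p.2 : ℝ) + ‖p.1‖ ^ 2) ^ (-s)) := by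
    apply Continuous.rpow_const
    · continuity
    · intro p
      left
      have := hpos p.2
      positivity
  set G : C(E × σA, ℝ) := ⟨_, hGcont⟩ with hG
  set F : C(E, C(σA, ℝ)) := G.curry with hF
  -- identification of cfc with cfcHom applied to F q
  have hcontOn : ∀ q : E, ContinuousOn (fun x : ℝ => (x + ‖q‖ ^ 2) ^ (-s)) σA := by
    intro q
    apply ContinuousOn.rpow_const (by fun_prop)
    intro x hx
    left
    have := lt_of_lt_of_le hℓ (hσ hx)
    positivity
  have hF_eq : ∀ q : E, cfc (fun x : ℝ => (x + ‖q‖ ^ 2) ^ (-s)) A = cfcHom hA (F q) := by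
    intro q
    rw [cfc_apply (fun x : ℝ => (x + ‖q‖ ^ 2) ^ (-s)) A hA (hcontOn q)]
    rfl
  -- the continuous linear functional
  set Ψ : (H →L[ℂ] H) →L[ℂ] ℂ := (innerSL ℂ J).comp (ContinuousLinearMap.apply ℂ H K) with hΨ
  have hΨapp : ∀ T : H →L[ℂ] H, Ψ T = ⟪J, T K⟫_ℂ := fun T => rfl
  set cfcL : C(σA, ℝ) →L[ℝ] (H →L[ℂ] H) :=
    LinearMap.mkContinuous ((cfcHom hA (R := ℝ)).toAlgHom.toLinearMap) 1
      (fun f => by rw [one_mul]; exact le_of_eq (norm_cfcHom A f hA)) with hcfcL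
  set Φ : C(σA, ℝ) →L[ℝ] ℂ := (Ψ.restrictScalars ℝ).comp cfcL with hΦ
  have hΦapp : ∀ f : C(σA, ℝ), Φ f = ⟪J, cfcHom hA f K⟫_ℂ := fun f => rfl
  -- integrability of F
  have hFnorm : ∀ q : E, ‖F q‖ ≤ (ℓ + ‖q‖ ^ 2) ^ (-s) := by
    intro q
    have h1 : (0:ℝ) < ℓ + ‖q‖ ^ 2 := add_pos_of_pos_of_nonneg hℓ (sq_nonneg _)
    refine (ContinuousMap.norm_le _ (Real.rpow_nonneg h1.le _)).mpr fun x => ?_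
    have h2 : ℓ + ‖q‖ ^ 2 ≤ (x:ℝ) + ‖q‖ ^ 2 := by
      have := hσ x.2; simp only [Set.mem_Ici] at this; linarith
    have h3 := Real.rpow_le_rpow_of_nonpos h1 h2 (by linarith : -s ≤ 0)
    have h4 : (F q) x = ((x:ℝ) + ‖q‖ ^ 2) ^ (-s) := rfl
    have h5 : (0:ℝ) ≤ (x:ℝ) + ‖q‖ ^ 2 := add_nonneg (hpos x).le (sq_nonneg _)
    rw [h4, Real.norm_eq_abs, abs_of_nonneg (Real.rpow_nonneg h5 _)]
    exact h3
  have hFcont : Continuous fun q : E => F q := F.continuous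
  have hFint : Integrable (fun q : E => F q) := by
    refine (aux_integrable hℓ hs).mono' hFcont.aestronglyMeasurable ?_
    exact Eventually.of_forall fun q => (norm_norm (F q)) ▸ hFnorm q
  -- identify the integral of F
  have hconst : ContinuousOn (fun x : ℝ => x ^ ((m : ℝ) / 2 - s)) σA := by
    apply ContinuousOn.rpow_const (by fun_prop)
    intro x hx
    left
    exact ne_of_gt (lt_of_lt_of_le hℓ (hσ hx))
  have hconst2 : ContinuousOn
      (fun x : ℝ => (π ^ ((m : ℝ) / 2) * (Real.Gamma (s - m / 2) / Real.Gamma s)) *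
        x ^ ((m : ℝ) / 2 - s)) σA := continuousOn_const.mul hconst
  have h2 : (∫ q : E, F q) =
      ⟨_, hconst2.restrict⟩ := by
    apply ContinuousMap.ext
    intro x
    have hev : (∫ q : E, F q) x = ∫ q : E, (F q) x := by
      have := (ContinuousMap.evalCLM ℝ x).integral_comp_comm hFint
      exact this.symm
    rw [hev]
    have : ∀ q : E, (F q) x = ((x:ℝ) + ‖q‖ ^ 2) ^ (-s) := fun q => rfl
    simp_rw [this]
    exact aux_integral (hpos x) hs
  have hstep : (∫ q : E, ⟪J, cfc (fun x : ℝ => (x + ‖q‖ ^ 2) ^ (-s)) A K⟫_ℂ)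
      = Φ (∫ q : E, F q) := by
    rw [← Φ.integral_comp_comm hFint]
    exact integral_congr_ae (Eventually.of_forall fun q => by
      show ⟪J, (cfc (fun x : ℝ => (x + ‖q‖ ^ 2) ^ (-s)) A) K⟫_ℂ = Φ (F q)
      rw [hF_eq q]; exact (hΦapp (F q)).symm)
  rw [hstep, h2, hΦapp]
  have hsplit : cfc (fun x : ℝ => (π ^ ((m : ℝ) / 2) *
        (Real.Gamma (s - m / 2) / Real.Gamma s)) * x ^ ((m : ℝ) / 2 - s)) A
      = (π ^ ((m : ℝ) / 2) * (Real.Gamma (s - m / 2) / Real.Gamma s)) •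
        cfc (fun x : ℝ => x ^ ((m : ℝ) / 2 - s)) A :=
    cfc_const_mul _ _ A hconst
  have hmk : cfcHom hA (⟨_, hconst2.restrict⟩ : C(σA, ℝ))
      = cfc (fun x : ℝ => (π ^ ((m : ℝ) / 2) *
        (Real.Gamma (s - m / 2) / Real.Gamma s)) * x ^ ((m : ℝ) / 2 - s)) A := by
    rw [cfc_apply _ A hA hconst2]
  rw [hmk, hsplit, ContinuousLinearMap.smul_apply,
    ← algebraMap_smul ℂ (π ^ ((m : ℝ) / 2) * (Real.Gamma (s - m / 2) / Real.Gamma s))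
      ((cfc (fun x : ℝ => x ^ ((m : ℝ) / 2 - s)) A) K),
    inner_smul_right]
  norm_num [Complex.coe_algebraMap]
end

section
variable {H : Type*} [NormedAddCommGroup H] [InnerProductSpace ℂ H] [CompleteSpace H]
  (A : H →L[ℂ] H) (hA : IsSelfAdjoint A) {ℓ : ℝ} (hℓ : 0 < ℓ)
  (hσ : spectrum ℝ A ⊆ Set.Ici ℓ) {m : ℕ} {s : ℝ} (hs : (m : ℝ) / 2 < s)

include hℓ hσ hA hs in
lemma aux_cont (J K : H) :
    Continuous fun q : EuclideanSpace ℝ (Fin m) =>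
      ⟪J, cfc (fun x : ℝ => (x + ‖q‖ ^ 2) ^ (-s)) A K⟫_ℂ := by
  have hs0 : 0 < s := lt_of_le_of_lt (by positivity) hs
  set E := EuclideanSpace ℝ (Fin m)
  set σA := spectrum ℝ A with hσA
  have hpos : ∀ x : σA, (0:ℝ) < (x : ℝ) := fun x => lt_of_lt_of_le hℓ (hσ x.2)
  have hGcont : Continuous fun p : E × σA => (((p.2 : ℝ) + ‖p.1‖ ^ 2) ^ (-s)) := by
    apply Continuous.rpow_const
    · continuity
    · intro p
      left
      have := hpos p.2
      positivity
  set G : C(E × σA, ℝ) := ⟨_, hGcont⟩ with hG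
  set F : C(E, C(σA, ℝ)) := G.curry with hF
  have hcontOn : ∀ q : E, ContinuousOn (fun x : ℝ => (x + ‖q‖ ^ 2) ^ (-s)) σA := by
    intro q
    apply ContinuousOn.rpow_const (by fun_prop)
    intro x hx
    left
    have := lt_of_lt_of_le hℓ (hσ hx)
    positivity
  have hF_eq : ∀ q : E, cfc (fun x : ℝ => (x + ‖q‖ ^ 2) ^ (-s)) A = cfcHom hA (F q) := by
    intro q
    rw [cfc_apply (fun x : ℝ => (x + ‖q‖ ^ 2) ^ (-s)) A hA (hcontOn q)]
    rfl
  set Ψ : (H →L[ℂ] H) →L[ℂ] ℂ := (innerSL ℂ J).comp (ContinuousLinearMap.apply ℂ H K) with hΨ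
  set cfcL : C(σA, ℝ) →L[ℝ] (H →L[ℂ] H) :=
    LinearMap.mkContinuous ((cfcHom hA (R := ℝ)).toAlgHom.toLinearMap) 1
      (fun f => by rw [one_mul]; exact le_of_eq (norm_cfcHom A f hA)) with hcfcL
  set Φ : C(σA, ℝ) →L[ℝ] ℂ := (Ψ.restrictScalars ℝ).comp cfcL with hΦ
  have hΦapp : ∀ f : C(σA, ℝ), Φ f = ⟪J, cfcHom hA f K⟫_ℂ := fun f => rfl
  have : (fun q : E => ⟪J, cfc (fun x : ℝ => (x + ‖q‖ ^ 2) ^ (-s)) A K⟫_ℂ)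
      = fun q : E => Φ (F q) := by
    funext q
    rw [hF_eq q]
    exact (hΦapp (F q)).symm
  rw [this]
  exact Φ.continuous.comp F.continuous

include hℓ hσ hA hs in
lemma aux_bound (J K : H) (q : EuclideanSpace ℝ (Fin m)) :
    ‖⟪J, cfc (fun x : ℝ => (x + ‖q‖ ^ 2) ^ (-s)) A K⟫_ℂ‖
      ≤ ‖J‖ * ‖K‖ * (ℓ + ‖q‖ ^ 2) ^ (-s) := by
  have hs0 : 0 < s := lt_of_le_of_lt (by positivity) hs
  have h1 : (0:ℝ) < ℓ + ‖q‖ ^ 2 := add_pos_of_pos_of_nonneg hℓ (sq_nonneg _)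
  have hcontOn : ContinuousOn (fun x : ℝ => (x + ‖q‖ ^ 2) ^ (-s)) (spectrum ℝ A) := by
    apply ContinuousOn.rpow_const (by fun_prop)
    intro x hx
    left
    have := lt_of_lt_of_le hℓ (hσ hx)
    positivity
  have hnorm : ‖cfc (fun x : ℝ => (x + ‖q‖ ^ 2) ^ (-s)) A‖ ≤ (ℓ + ‖q‖ ^ 2) ^ (-s) := by
    apply norm_cfc_le (Real.rpow_nonneg h1.le _)
    intro x hx
    have hx1 : ℓ ≤ x := hσ hx
    have h2 : (0:ℝ) ≤ x + ‖q‖ ^ 2 := by nlinarith [sq_nonneg ‖q‖]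
    rw [Real.norm_eq_abs, abs_of_nonneg (Real.rpow_nonneg h2 _)]
    exact Real.rpow_le_rpow_of_nonpos h1 (by linarith) (by linarith)
  calc ‖⟪J, cfc (fun x : ℝ => (x + ‖q‖ ^ 2) ^ (-s)) A K⟫_ℂ‖
      ≤ ‖J‖ * ‖cfc (fun x : ℝ => (x + ‖q‖ ^ 2) ^ (-s)) A K‖ := norm_inner_le_norm _ _
    _ ≤ ‖J‖ * (‖cfc (fun x : ℝ => (x + ‖q‖ ^ 2) ^ (-s)) A‖ * ‖K‖) := by
        gcongr
        exact ContinuousLinearMap.le_opNorm _ _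
    _ ≤ ‖J‖ * ((ℓ + ‖q‖ ^ 2) ^ (-s) * ‖K‖) := by
        gcongr
    _ = ‖J‖ * ‖K‖ * (ℓ + ‖q‖ ^ 2) ^ (-s) := by ring

end

section fourier
variable {m : ℕ} (η : EuclideanSpace ℝ (Fin m) → ℂ) (hηi : Integrable η)

include hηi in
lemma aux_fourier_cont : Continuous (𝓕 η) :=
  VectorFourier.fourierIntegral_continuous Real.continuous_fourierChar
    (by exact continuous_inner) hηi

lemma aux_fourier_bound (w : EuclideanSpace ℝ (Fin m)) : ‖𝓕 η w‖ ≤ ∫ v, ‖η v‖ :=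
  VectorFourier.norm_fourierIntegral_le_integral_norm _ _ _ _ _

lemma aux_fourier_zero (hηint : ∫ y : EuclideanSpace ℝ (Fin m), η y = 1) : 𝓕 η 0 = 1 := by
  rw [Real.fourier_eq]
  simp only [inner_zero_right, neg_zero, AddChar.map_zero_eq_one, one_smul]
  exact hηint
end fourier
lemma aux_const (m : ℕ) : ((4:ℝ)*π) ^ (-(m:ℝ)/2) = (2*π) ^ (-(m:ℝ)) * π ^ ((m:ℝ)/2) := by
  have h1 : (0:ℝ) < π := pi_pos
  have h2 : (0:ℝ) < 2*π := by positivity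
  rw [show (4:ℝ)*π = (2*π)*(2*π)/π by field_simp; ring]
  rw [Real.div_rpow (by positivity) h1.le, Real.mul_rpow h2.le h2.le,
    ← Real.rpow_add h2, div_eq_mul_inv, ← Real.rpow_neg h1.le]
  rw [show -(m:ℝ)/2 + -(m:ℝ)/2 = -(m:ℝ) by ring, show -(-(m:ℝ)/2) = (m:ℝ)/2 by ring]

set_option maxHeartbeats 1000000 in
theorem stmt_5 {H : Type*} [NormedAddCommGroup H] [InnerProductSpace ℂ H] [CompleteSpace H]
    (A : H →L[ℂ] H) (hA : IsSelfAdjoint A) (ℓ : ℝ) (hℓ : 0 < ℓ)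
    (hbound : ∀ x : H, ℓ * ‖x‖ ^ 2 ≤ (⟪x, A x⟫_ℂ).re)
    (m : ℕ) (hm : 1 ≤ m) (s : ℝ) (hs : s > m / 2)
    (η : EuclideanSpace ℝ (Fin m) → ℂ) (hηc : Continuous η) (hηs : HasCompactSupport η)
    (hηint : ∫ y : EuclideanSpace ℝ (Fin m), η y = 1) (J K : H) :
    Tendsto (fun ε : ℝ =>
        ∫ q : EuclideanSpace ℝ (Fin m),
          ((‖𝓕 η (ε • q)‖ ^ 2 * (2 * π) ^ (-(m : ℝ)) : ℝ) : ℂ) *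
            ⟪J, cfc (fun x : ℝ => (x + ‖q‖ ^ 2) ^ (-s)) A K⟫_ℂ)
      (𝓝[>] 0)
      (𝓝 ((((4 * π) ^ (-(m : ℝ) / 2) * (Real.Gamma (s - m / 2) / Real.Gamma s) : ℝ) : ℂ) *
          ⟪J, cfc (fun x : ℝ => x ^ ((m : ℝ) / 2 - s)) A K⟫_ℂ)) := by
  obtain hH | hH := subsingleton_or_nontrivial H
  · have hJ : J = 0 := Subsingleton.elim _ _
    simp only [hJ, inner_zero_left, mul_zero, integral_zero]
    exact tendsto_const_nhds
  · have hs' : (m : ℝ) / 2 < s := hs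
    have hσ : spectrum ℝ A ⊆ Set.Ici ℓ := aux_spectrum A hA ℓ hℓ hbound
    have hηi : Integrable η := hηc.integrable_of_hasCompactSupport hηs
    have h𝓕c : Continuous (𝓕 η) := aux_fourier_cont η hηi
    have h𝓕0 : 𝓕 η 0 = 1 := aux_fourier_zero η hηint
    have hcc : Continuous fun q : EuclideanSpace ℝ (Fin m) =>
        ⟪J, cfc (fun x : ℝ => (x + ‖q‖ ^ 2) ^ (-s)) A K⟫_ℂ := aux_cont A hA hℓ hσ hs' J K
    have hcb : ∀ q : EuclideanSpace ℝ (Fin m),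
        ‖⟪J, cfc (fun x : ℝ => (x + ‖q‖ ^ 2) ^ (-s)) A K⟫_ℂ‖
          ≤ ‖J‖ * ‖K‖ * (ℓ + ‖q‖ ^ 2) ^ (-s) := aux_bound A hA hℓ hσ hs' J K
    have hgint : Integrable (fun q : EuclideanSpace ℝ (Fin m) => (ℓ + ‖q‖ ^ 2) ^ (-s)) :=
      aux_integrable hℓ hs'
    have hη0 : (0:ℝ) ≤ ∫ v, ‖η v‖ := integral_nonneg fun v => norm_nonneg _
    have hmain : Tendsto (fun ε : ℝ =>
        ∫ q : EuclideanSpace ℝ (Fin m),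
          ((‖𝓕 η (ε • q)‖ ^ 2 * (2 * π) ^ (-(m : ℝ)) : ℝ) : ℂ) *
            ⟪J, cfc (fun x : ℝ => (x + ‖q‖ ^ 2) ^ (-s)) A K⟫_ℂ)
        (𝓝[>] 0)
        (𝓝 (∫ q : EuclideanSpace ℝ (Fin m), (((2 * π) ^ (-(m : ℝ)) : ℝ) : ℂ) *
            ⟪J, cfc (fun x : ℝ => (x + ‖q‖ ^ 2) ^ (-s)) A K⟫_ℂ)) := by
      apply tendsto_integral_filter_of_dominated_convergence
        (bound := fun q : EuclideanSpace ℝ (Fin m) =>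
          ((∫ v, ‖η v‖) ^ 2 * (2 * π) ^ (-(m : ℝ)) * (‖J‖ * ‖K‖)) * (ℓ + ‖q‖ ^ 2) ^ (-s))
      · refine Eventually.of_forall fun ε => Continuous.aestronglyMeasurable ?_
        refine Continuous.mul ?_ hcc
        refine Complex.continuous_ofReal.comp ?_
        exact (((h𝓕c.comp (continuous_const_smul ε)).norm.pow 2).mul continuous_const)
      · refine Eventually.of_forall fun ε => Eventually.of_forall fun q => ?_
        have hb𝓕 := aux_fourier_bound η (ε • q)
        have hr0 : (0:ℝ) ≤ ‖𝓕 η (ε • q)‖ ^ 2 * (2 * π) ^ (-(m : ℝ)) := by positivity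
        rw [norm_mul, Complex.norm_real, Real.norm_eq_abs, abs_of_nonneg hr0]
        calc ‖𝓕 η (ε • q)‖ ^ 2 * (2 * π) ^ (-(m : ℝ)) *
              ‖⟪J, cfc (fun x : ℝ => (x + ‖q‖ ^ 2) ^ (-s)) A K⟫_ℂ‖
            ≤ ((∫ v, ‖η v‖) ^ 2 * (2 * π) ^ (-(m : ℝ))) *
              (‖J‖ * ‖K‖ * (ℓ + ‖q‖ ^ 2) ^ (-s)) := by
              refine mul_le_mul ?_ (hcb q) (norm_nonneg _) (by positivity)
              gcongr
          _ = ((∫ v, ‖η v‖) ^ 2 * (2 * π) ^ (-(m : ℝ)) * (‖J‖ * ‖K‖)) *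
              (ℓ + ‖q‖ ^ 2) ^ (-s) := by ring
      · exact hgint.const_mul _
      · refine Eventually.of_forall fun q => ?_
        have t1 : Tendsto (fun ε : ℝ => ε • q) (𝓝[>] (0:ℝ))
            (𝓝 (0 : EuclideanSpace ℝ (Fin m))) := by
          have h : Tendsto (fun ε : ℝ => ε • q) (𝓝 0) (𝓝 ((0:ℝ) • q)) :=
            ((continuous_id.smul continuous_const).tendsto 0)
          rw [zero_smul] at h
          exact h.mono_left nhdsWithin_le_nhds
        have t2 : Tendsto (fun ε : ℝ => ‖𝓕 η (ε • q)‖ ^ 2 * (2 * π) ^ (-(m : ℝ)))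
            (𝓝[>] (0:ℝ)) (𝓝 ((2 * π) ^ (-(m : ℝ)))) := by
          have t3 := (((h𝓕c.tendsto 0).comp t1).norm.pow 2).mul_const ((2 * π) ^ (-(m : ℝ)))
          rw [h𝓕0] at t3
          simpa using t3
        exact ((Complex.continuous_ofReal.tendsto _).comp t2).mul_const _
    have hval : (∫ q : EuclideanSpace ℝ (Fin m), (((2 * π) ^ (-(m : ℝ)) : ℝ) : ℂ) *
            ⟪J, cfc (fun x : ℝ => (x + ‖q‖ ^ 2) ^ (-s)) A K⟫_ℂ)
        = (((4 * π) ^ (-(m : ℝ) / 2) * (Real.Gamma (s - m / 2) / Real.Gamma s) : ℝ) : ℂ) *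
          ⟪J, cfc (fun x : ℝ => x ^ ((m : ℝ) / 2 - s)) A K⟫_ℂ := by
      rw [integral_const_mul, aux_exchange A hA hℓ hσ hs' J K, ← mul_assoc,
        ← Complex.ofReal_mul]
      congr 2
      rw [show (-(m:ℝ)/2) = -(m:ℝ)/2 from rfl, aux_const m]
      ring
    rw [hval] at hmain
    exact hmain
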